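/- Let d ≥ 2 be an integer, C₀ > 0 and ε > 0. Let K : ℝ^d × (0,∞) → ℝ be measurable with |K(y,s)| ≤ C₀·min(‖y‖^{−d}, s^{−d/2}) for all y ≠ 0, s > 0, and let f : ℝ^d × [0,∞) → ℝ be measurable with |f(y,s)| ≤ ε·min((1+‖y‖)^{−d−2}, (1+s)^{−(d+2)/2}) for a.e. (y,s) and ∫₀^∞ ∫_{ℝ^d} |f(y,s)| dy ds ≤ ε. Then there exists a constant C > 0 (depending only on d and C₀) such that for all t > 0 and all x ∈ ℝ^d, |∫₀^t ∫_{ℝ^d} K(x−y, t−s) f(y,s) dy ds| ≤ C·ε·min((1+‖x‖)^{−d}, (1+t)^{−d/2}). -/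

import Mathlib

open MeasureTheory Set Metric
open scoped ENNReal



/-- Generic layer-cake bound. -/
lemma stmt4_layercake {α : Type*} [MeasurableSpace α] (μ : Measure α) (g : α → ℝ)
    (hg : AEMeasurable g μ) (hg0 : 0 ≤ᵐ[μ] g) (c A q T : ℝ)
    (hc : 0 ≤ c) (hA : 0 ≤ A) (hT : 0 < T) (hq : 1 < q)
    (hlev : ∀ lam : ℝ, 0 < lam →
      μ {a | lam ≤ g a} ≤ ENNReal.ofReal (c * min A (lam ^ (-q)))) :
    ∫⁻ a, ENNReal.ofReal (g a) ∂μ ≤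
      ENNReal.ofReal (c * (A * T + T ^ (1 - q) / (q - 1))) := by
  rw [lintegral_eq_lintegral_meas_le μ hg0 hg]
  have hsplit : Ioc (0:ℝ) T ∪ Ioi T = Ioi 0 := Ioc_union_Ioi_eq_Ioi hT.le
  calc ∫⁻ lam in Ioi (0:ℝ), μ {a | lam ≤ g a}
      ≤ (∫⁻ lam in Ioc (0:ℝ) T, μ {a | lam ≤ g a}) + ∫⁻ lam in Ioi T, μ {a | lam ≤ g a} := by
        rw [← hsplit]; exact lintegral_union_le _ _ _
    _ ≤ ENNReal.ofReal (c * A) * ENNReal.ofReal T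
        + ENNReal.ofReal (c * (T ^ (1 - q) / (q - 1))) := by
        gcongr
        · calc ∫⁻ lam in Ioc (0:ℝ) T, μ {a | lam ≤ g a}
              ≤ ∫⁻ _ in Ioc (0:ℝ) T, ENNReal.ofReal (c * A) := by
                refine setLIntegral_mono_ae measurable_const.aemeasurable (ae_of_all _ fun lam hlam => ?_)
                refine (hlev lam hlam.1).trans (ENNReal.ofReal_le_ofReal ?_)
                exact mul_le_mul_of_nonneg_left (min_le_left _ _) hc
            _ = ENNReal.ofReal (c * A) * volume (Ioc (0:ℝ) T) := setLIntegral_const _ _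
            _ ≤ ENNReal.ofReal (c * A) * ENNReal.ofReal T := by
                rw [Real.volume_Ioc]; gcongr; simp
        · calc ∫⁻ lam in Ioi T, μ {a | lam ≤ g a}
              ≤ ∫⁻ lam in Ioi T, ENNReal.ofReal (c * lam ^ (-q)) := by
                have hm : Measurable fun lam : ℝ => ENNReal.ofReal (c * lam ^ (-q)) := by fun_prop
                refine setLIntegral_mono_ae hm.aemeasurable (ae_of_all _ fun lam hlam => ?_)
                refine (hlev lam (hT.trans hlam)).trans (ENNReal.ofReal_le_ofReal ?_)
                exact mul_le_mul_of_nonneg_left (min_le_right _ _) hc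
            _ = ENNReal.ofReal (∫ lam in Ioi T, c * lam ^ (-q)) := by
                rw [ofReal_integral_eq_lintegral_ofReal]
                · exact (integrableOn_Ioi_rpow_of_lt (by linarith) hT).const_mul c
                · refine (ae_restrict_iff' measurableSet_Ioi).2 (ae_of_all _ fun lam hlam => ?_)
                  exact mul_nonneg hc (Real.rpow_nonneg (hT.trans hlam).le _)
            _ = ENNReal.ofReal (c * (T ^ (1 - q) / (q - 1))) := by
                rw [MeasureTheory.integral_const_mul, integral_Ioi_rpow_of_lt (by linarith) hT]
                congr 1
                have h1 : -q + 1 = 1 - q := by ring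
                rw [h1]
                have key : -T ^ (1 - q) / (1 - q) = T ^ (1 - q) / (q - 1) := by
                  rw [div_eq_div_iff (by intro h; linarith [sub_eq_zero.mp h])
                    (by intro h; linarith [sub_eq_zero.mp h])]
                  ring
                rw [key]
    _ = ENNReal.ofReal (c * (A * T + T ^ (1 - q) / (q - 1))) := by
        have hTq : (0:ℝ) ≤ T ^ (1 - q) := Real.rpow_nonneg hT.le _
        rw [← ENNReal.ofReal_mul (by positivity), ← ENNReal.ofReal_add (by positivity) (mul_nonneg hc (div_nonneg hTq (by linarith)))]
        congr 1; ring

private lemma ofReal_min' (a b : ℝ) :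
    ENNReal.ofReal (min a b) = min (ENNReal.ofReal a) (ENNReal.ofReal b) :=
  Monotone.map_min (fun _ _ h => ENNReal.ofReal_le_ofReal h)

/-- Radial integral over a ball. -/
lemma stmt4_ballInt (d : ℕ) (hd : 2 ≤ d) (x : EuclideanSpace ℝ (Fin d)) (R : ℝ) (hR : 0 < R) :
    ∫⁻ y in Metric.ball x R, ENNReal.ofReal (‖x - y‖ ^ (-((d:ℝ) - 1))) ≤
      ENNReal.ofReal ((volume (Metric.ball (0 : EuclideanSpace ℝ (Fin d)) 1)).toReal
        * ((d:ℝ) * R)) := by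
  haveI : Nonempty (Fin d) := ⟨⟨0, by omega⟩⟩
  set ω : ℝ := (volume (Metric.ball (0 : EuclideanSpace ℝ (Fin d)) 1)).toReal with hω
  have hω0 : 0 ≤ ω := ENNReal.toReal_nonneg
  have hd2 : (2:ℝ) ≤ (d:ℝ) := by exact_mod_cast hd
  have hd1' : (d:ℝ) - 1 ≠ 0 := by linarith
  have hq : 1 < (d:ℝ) / ((d:ℝ) - 1) := by
    rw [lt_div_iff₀ (by linarith)]; linarith
  have hballe : ∀ r : ℝ, 0 ≤ r → volume (Metric.closedBall x r) =
      ENNReal.ofReal (ω * r ^ ((d:ℝ))) := by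
    intro r hr
    rw [Measure.addHaar_closedBall _ _ hr, finrank_euclideanSpace_fin,
      ← ENNReal.ofReal_toReal
        (measure_ball_lt_top (x := (0 : EuclideanSpace ℝ (Fin d))) (r := 1)).ne,
      ← ENNReal.ofReal_mul (by positivity), Real.rpow_natCast]
    rw [mul_comm]
  have key := stmt4_layercake (volume.restrict (Metric.ball x R))
    (fun y => ‖x - y‖ ^ (-((d:ℝ) - 1))) (by fun_prop)
    (ae_of_all _ fun y => Real.rpow_nonneg (norm_nonneg _) _)
    ω (R ^ ((d:ℝ))) ((d:ℝ) / ((d:ℝ) - 1)) (R ^ (-((d:ℝ) - 1)))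
    hω0 (Real.rpow_nonneg hR.le _) (Real.rpow_pos_of_pos hR _) hq ?_
  · refine key.trans (ENNReal.ofReal_le_ofReal (le_of_eq ?_))
    have e1 : R ^ ((d:ℝ)) * R ^ (-((d:ℝ) - 1)) = R := by
      rw [← Real.rpow_add hR]; norm_num
    have he : (1 - (d:ℝ)/((d:ℝ)-1)) = -(1/((d:ℝ)-1)) := by field_simp; ring
    have e2 : (R ^ (-((d:ℝ) - 1))) ^ (1 - (d:ℝ) / ((d:ℝ) - 1)) = R := by
      rw [he, ← Real.rpow_mul hR.le,
        show (-((d:ℝ)-1))*(-(1/((d:ℝ)-1))) = (1:ℝ) by field_simp, Real.rpow_one]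
    have e3 : (d:ℝ)/((d:ℝ)-1) - 1 = 1/((d:ℝ)-1) := by field_simp; ring
    rw [e1, e2, e3]
    have e4 : R / (1/((d:ℝ)-1)) = R * ((d:ℝ)-1) := by field_simp
    rw [e4]; ring
  · intro lam hlam
    set ρ : ℝ := lam ^ (-(1/((d:ℝ)-1))) with hρdef
    have hρ0 : 0 ≤ ρ := Real.rpow_nonneg hlam.le _
    have hsub : {y : EuclideanSpace ℝ (Fin d) | lam ≤ ‖x - y‖ ^ (-((d:ℝ) - 1))}
        ⊆ Metric.closedBall x ρ := by
      intro y hy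
      simp only [mem_setOf_eq] at hy
      have hz0 : ‖x - y‖ ≠ 0 := by
        intro h
        rw [h, Real.zero_rpow (neg_ne_zero.mpr hd1')] at hy
        linarith
      have hz : 0 < ‖x - y‖ := lt_of_le_of_ne (norm_nonneg _) (Ne.symm hz0)
      have hpos1 : (0:ℝ) < 1/((d:ℝ)-1) := by
        rw [one_div]; exact inv_pos.mpr (by linarith)
      have h2 := Real.rpow_le_rpow_of_nonpos hlam hy (neg_nonpos.mpr hpos1.le)
      rw [← Real.rpow_mul (norm_nonneg _),
        show (-((d:ℝ)-1))*(-(1/((d:ℝ)-1))) = (1:ℝ) by field_simp, Real.rpow_one] at h2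
      exact mem_closedBall'.mpr (by rw [dist_eq_norm]; exact h2)
    have bound2 : (volume.restrict (Metric.ball x R))
        {y : EuclideanSpace ℝ (Fin d) | lam ≤ ‖x - y‖ ^ (-((d:ℝ) - 1))} ≤
        ENNReal.ofReal (ω * lam ^ (-((d:ℝ)/((d:ℝ)-1)))) := by
      rw [Measure.restrict_apply' measurableSet_ball]
      refine (measure_mono fun y hy => hsub hy.1).trans (le_of_eq ?_)
      rw [hballe ρ hρ0]
      congr 2
      rw [hρdef, ← Real.rpow_mul hlam.le]
      congr 1
      field_simp
    have bound1 : (volume.restrict (Metric.ball x R))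
        {y : EuclideanSpace ℝ (Fin d) | lam ≤ ‖x - y‖ ^ (-((d:ℝ) - 1))} ≤
        ENNReal.ofReal (ω * R ^ ((d:ℝ))) := by
      refine (measure_mono (subset_univ _)).trans ?_
      rw [Measure.restrict_apply_univ]
      exact (measure_mono Metric.ball_subset_closedBall).trans (le_of_eq (hballe R hR.le))
    rw [mul_min_of_nonneg _ _ hω0, ofReal_min']
    exact le_min bound1 bound2

/-- Time integral bound. -/
lemma stmt4_timeInt (t R : ℝ) (hR : 0 < R) :
    ∫⁻ s in Set.Ioc 0 t ∩ {s : ℝ | t - s < R^2},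
      ENNReal.ofReal ((t - s) ^ (-(1:ℝ)/2)) ≤ ENNReal.ofReal (2 * R) := by
  have hSm : MeasurableSet (Set.Ioc (0:ℝ) t ∩ {s : ℝ | t - s < R^2}) := by
    refine measurableSet_Ioc.inter ?_
    exact measurableSet_lt (by fun_prop) measurable_const
  have key := stmt4_layercake (volume.restrict (Set.Ioc 0 t ∩ {s : ℝ | t - s < R^2}))
    (fun s => (t - s) ^ (-(1:ℝ)/2)) (by fun_prop)
    ?_ 1 (R^2) 2 R⁻¹ zero_le_one (sq_nonneg R) (inv_pos.mpr hR) one_lt_two ?_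
  · refine key.trans (ENNReal.ofReal_le_ofReal (le_of_eq ?_))
    have e2 : (R⁻¹ : ℝ) ^ ((1:ℝ) - 2) = R := by
      rw [show (1:ℝ) - 2 = -1 by norm_num, Real.rpow_neg_one, inv_inv]
    rw [e2]
    field_simp
    ring
  · refine (ae_restrict_iff' hSm).2 (ae_of_all _ fun s hs => ?_)
    exact Real.rpow_nonneg (by linarith [hs.1.2]) _
  · intro lam hlam
    have hsub : {s : ℝ | lam ≤ (t - s) ^ (-(1:ℝ)/2)} ∩
        (Set.Ioc 0 t ∩ {s : ℝ | t - s < R^2}) ⊆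
        Set.Icc (t - min (R^2) (lam ^ (-(2:ℝ)))) t := by
      rintro s ⟨hy, hs, hcut⟩
      simp only [mem_setOf_eq] at hy hcut
      have hts0 : 0 ≤ t - s := by linarith [hs.2]
      have hts : 0 < t - s := by
        rcases hts0.lt_or_eq with h | h
        · exact h
        · exfalso
          rw [← h, Real.zero_rpow (by norm_num)] at hy
          linarith
      have h2 := Real.rpow_le_rpow_of_nonpos hlam hy (by norm_num : (-2:ℝ) ≤ 0)
      rw [← Real.rpow_mul hts0, show (-(1:ℝ)/2) * (-2) = (1:ℝ) by norm_num,
        Real.rpow_one] at h2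
      constructor
      · have : t - s ≤ min (R^2) (lam ^ (-(2:ℝ))) := le_min hcut.le h2
        linarith
      · exact hs.2
    calc (volume.restrict (Set.Ioc 0 t ∩ {s : ℝ | t - s < R^2}))
          {s : ℝ | lam ≤ (t - s) ^ (-(1:ℝ)/2)}
        ≤ volume (Set.Icc (t - min (R^2) (lam ^ (-(2:ℝ)))) t) := by
          rw [Measure.restrict_apply' hSm]
          exact measure_mono hsub
      _ ≤ ENNReal.ofReal (1 * min (R^2) (lam ^ (-(2:ℝ)))) := by
          rw [Real.volume_Icc, one_mul]
          exact ENNReal.ofReal_le_ofReal (by linarith)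


private lemma min_le_rpow_interp {a b θ : ℝ} (ha : 0 < a) (hb : 0 < b)
    (h0 : 0 ≤ θ) (h1 : θ ≤ 1) : min a b ≤ a ^ θ * b ^ (1 - θ) := by
  have hm : 0 < min a b := lt_min ha hb
  calc min a b = (min a b) ^ θ * (min a b) ^ (1 - θ) := by
        rw [← Real.rpow_add hm, add_sub_cancel, Real.rpow_one]
    _ ≤ a ^ θ * b ^ (1 - θ) :=
        mul_le_mul (Real.rpow_le_rpow hm.le (min_le_left _ _) h0)
          (Real.rpow_le_rpow hm.le (min_le_right _ _) (by linarith))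
          (Real.rpow_nonneg hm.le _) (Real.rpow_nonneg ha.le _)

/-- Interpolation bound on the kernel. -/
lemma stmt4_kernel_interp {d : ℕ} (hd : 2 ≤ d) {zn σ : ℝ} (hzn : 0 < zn) (hσ : 0 < σ) :
    min (zn ^ (-(d:ℝ))) (σ ^ (-(d:ℝ)/2)) ≤ zn ^ (-((d:ℝ)-1)) * σ ^ (-(1:ℝ)/2) := by
  have hd2 : (2:ℝ) ≤ (d:ℝ) := by exact_mod_cast hd
  have hd0 : (d:ℝ) ≠ 0 := by linarith
  have h := min_le_rpow_interp (Real.rpow_pos_of_pos hzn (-(d:ℝ)))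
    (Real.rpow_pos_of_pos hσ (-(d:ℝ)/2)) (θ := ((d:ℝ)-1)/d)
    (div_nonneg (by linarith) (by linarith)) (by rw [div_le_one (by linarith)]; linarith)
  refine h.trans (le_of_eq ?_)
  rw [← Real.rpow_mul hzn.le, ← Real.rpow_mul hσ.le]
  congr 1
  · congr 1; field_simp
  · congr 1; field_simp; ring

/-- Antitone in base for nonpositive exponents, plus scaling. -/
lemma stmt4_rpow_base_antitone {a b e : ℝ} (ha : 0 < a) (hab : a ≤ b) (he : e ≤ 0) :
    b ^ e ≤ a ^ e := Real.rpow_le_rpow_of_nonpos ha hab he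

/-- Far-field kernel bound: if `c ≤ zn + √σ` then `min(zn^{-d}, σ^{-d/2}) ≤ (c/2)^{-d}`. -/
lemma stmt4_kernel_far {d : ℕ} {zn σ c : ℝ} (hzn : 0 < zn) (hσ : 0 < σ) (hc : 0 < c)
    (h : c ≤ zn + Real.sqrt σ) :
    min (zn ^ (-(d:ℝ))) (σ ^ (-(d:ℝ)/2)) ≤ (c/2) ^ (-(d:ℝ)) := by
  have hdneg : -(d:ℝ) ≤ 0 := neg_nonpos.mpr (Nat.cast_nonneg d)
  have hdneg2 : -(d:ℝ)/2 ≤ 0 := div_nonpos_of_nonpos_of_nonneg hdneg (by norm_num)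
  rcases le_or_gt (c/2) zn with hz | hz
  · exact (min_le_left _ _).trans (stmt4_rpow_base_antitone (by linarith) hz hdneg)
  · have hsq : c/2 < Real.sqrt σ := by linarith
    have hσ2 : (c/2)^2 < σ := (Real.lt_sqrt (by linarith)).mp hsq
    refine (min_le_right _ _).trans ?_
    have h1 : σ ^ (-(d:ℝ)/2) ≤ ((c/2)^2) ^ (-(d:ℝ)/2) :=
      stmt4_rpow_base_antitone (by positivity) hσ2.le hdneg2
    refine h1.trans (le_of_eq ?_)
    rw [← Real.rpow_natCast (c/2) 2, ← Real.rpow_mul (by positivity)]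
    congr 1
    push_cast
    ring

private lemma four_rpow_le_thirtytwo {u : ℝ} (hu : 0 ≤ u) :
    (4:ℝ) ^ u ≤ 32 ^ (u/2) := by
  have h4 : (4:ℝ) = 2 ^ (2:ℝ) := by
    rw [show (2:ℝ) = ((2:ℕ):ℝ) by norm_num, Real.rpow_natCast]; norm_num
  have h32 : (32:ℝ) = 2 ^ (5:ℝ) := by
    rw [show (5:ℝ) = ((5:ℕ):ℝ) by norm_num, Real.rpow_natCast]; norm_num
  rw [h4, h32, ← Real.rpow_mul (by norm_num), ← Real.rpow_mul (by norm_num)]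
  exact Real.rpow_le_rpow_of_exponent_le one_le_two (by linarith)

/-- Far-field bound on the source term. -/
lemma stmt4_f_far {d : ℕ} {yn s M' : ℝ} (hyn : 0 ≤ yn) (hs : 0 ≤ s) (hM' : 1 ≤ M')
    (h : M'/2 ≤ yn + Real.sqrt s) :
    min ((1+yn) ^ (-(d:ℝ)-2)) ((1+s) ^ (-((d:ℝ)+2)/2)) ≤
      32 ^ (((d:ℝ)+2)/2) * (1+M') ^ (-(d:ℝ)-2) := by
  set M : ℝ := 1 + M' with hMdef
  have hM : (2:ℝ) ≤ M := by simp [hMdef]; linarith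
  have hM0 : (0:ℝ) < M := by linarith
  have hexp : -(d:ℝ)-2 ≤ 0 := by
    have : (0:ℝ) ≤ (d:ℝ) := Nat.cast_nonneg d
    linarith
  have hκ : (4:ℝ) ^ ((d:ℝ)+2) ≤ 32 ^ (((d:ℝ)+2)/2) :=
    four_rpow_le_thirtytwo (by positivity)
  have hMe : (0:ℝ) < M ^ (-(d:ℝ)-2) := Real.rpow_pos_of_pos hM0 _
  have hdiv : (M/4) ^ (-(d:ℝ)-2) = M ^ (-(d:ℝ)-2) * 4 ^ ((d:ℝ)+2) := by
    rw [Real.div_rpow hM0.le (by norm_num : (0:ℝ) ≤ 4), div_eq_mul_inv,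
      ← Real.rpow_neg (by norm_num : (0:ℝ) ≤ 4)]
    congr 1
    ring
  rcases le_or_gt (M'/4) yn with h1 | h1
  · have hb : M/4 ≤ 1 + yn := by
      have : (1 + M')/4 ≤ 1 + M'/4 := by linarith
      simpa [hMdef] using this.trans (by linarith)
    refine (min_le_left _ _).trans ?_
    refine (stmt4_rpow_base_antitone (by linarith) hb hexp).trans ?_
    rw [hdiv]
    calc M ^ (-(d:ℝ)-2) * 4 ^ ((d:ℝ)+2)
        ≤ M ^ (-(d:ℝ)-2) * 32 ^ (((d:ℝ)+2)/2) := by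
          exact mul_le_mul_of_nonneg_left hκ hMe.le
      _ = 32 ^ (((d:ℝ)+2)/2) * M ^ (-(d:ℝ)-2) := by ring
  · have hsq : M'/4 ≤ Real.sqrt s := by linarith
    have hb : M/4 ≤ 1 + Real.sqrt s := by
      have : (1 + M')/4 ≤ 1 + M'/4 := by linarith
      simpa [hMdef] using this.trans (by linarith)
    have hss : M^2/32 ≤ 1 + s := by
      have h2s : 2 * Real.sqrt s ≤ 1 + s := by
        nlinarith [Real.sq_sqrt hs, Real.sqrt_nonneg s, sq_nonneg (Real.sqrt s - 1)]
      have hsqsq : (1 + Real.sqrt s)^2 ≤ 2 * (1 + s) := by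
        nlinarith [Real.sq_sqrt hs, Real.sqrt_nonneg s]
      nlinarith [sq_nonneg (1 + Real.sqrt s), hb]
    refine (min_le_right _ _).trans ?_
    refine (stmt4_rpow_base_antitone (by positivity) hss (by linarith : -((d:ℝ)+2)/2 ≤ 0)).trans ?_
    have e1 : (M^2/32 : ℝ) ^ (-((d:ℝ)+2)/2) = 32 ^ (((d:ℝ)+2)/2) * M ^ (-(d:ℝ)-2) := by
      rw [Real.div_rpow (by positivity) (by norm_num : (0:ℝ) ≤ 32), div_eq_mul_inv,
        ← Real.rpow_neg (by norm_num : (0:ℝ) ≤ 32), ← Real.rpow_natCast M 2,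
        ← Real.rpow_mul hM0.le]
      rw [show ((2:ℕ):ℝ) * (-((d:ℝ)+2)/2) = -(d:ℝ)-2 by push_cast; ring,
        show -(-((d:ℝ)+2)/2) = ((d:ℝ)+2)/2 by ring]
      ring
    rw [e1]


/-- Swap a.e. over a product measure into iterated a.e. with the second variable outside. -/
lemma stmt4_ae_swap {α β : Type*} [MeasurableSpace α] [MeasurableSpace β]
    (μ : Measure α) (ν : Measure β) [SFinite μ] [SFinite ν]
    {P : α × β → Prop} (hP : MeasurableSet {p : α × β | P p})
    (h : ∀ᵐ p ∂μ.prod ν, P p) : ∀ᵐ b ∂ν, ∀ᵐ a ∂μ, P (a, b) := by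
  have h2 : ∀ᵐ q ∂ν.prod μ, P (q.2, q.1) := by
    have hset : {q : β × α | ¬ P (q.2, q.1)} = Prod.swap ⁻¹' {p : α × β | ¬ P p} := rfl
    have hc : MeasurableSet {p : α × β | ¬ P p} := hP.compl
    rw [ae_iff, hset, ← Measure.map_apply measurable_swap hc, Measure.prod_swap]
    exact ae_iff.mp h
  exact Measure.ae_ae_of_ae_prod h2

set_option maxHeartbeats 2000000 in
/-- Let `K` satisfy `|K(y,s)| ≤ C₀ min(‖y‖^{−d}, s^{−d/2})` and let `f`
satisfy `|f(y,s)| ≤ ε min((1+‖y‖)^{−d−2}, (1+s)^{−(d+2)/2})` a.e. together with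
`∫₀^∞∫|f| ≤ ε`. Then there is `C > 0`, depending only on `d` and `C₀`, with
`|∫₀^t ∫ K(x−y,t−s) f(y,s) dy ds| ≤ C ε min((1+‖x‖)^{−d}, (1+t)^{−d/2})`
for all `t > 0` and all `x`. -/
theorem stmt4 (d : ℕ) (hd : 2 ≤ d) (C₀ : ℝ) (hC₀ : 0 < C₀) :
    ∃ C > (0 : ℝ), ∀ ε : ℝ, 0 < ε →
      ∀ K : EuclideanSpace ℝ (Fin d) → ℝ → ℝ, Measurable (Function.uncurry K) →
      (∀ y : EuclideanSpace ℝ (Fin d), y ≠ 0 → ∀ s : ℝ, 0 < s →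
        |K y s| ≤ C₀ * min (‖y‖ ^ (-(d : ℝ))) (s ^ (-(d : ℝ) / 2))) →
      ∀ f : EuclideanSpace ℝ (Fin d) → ℝ → ℝ, Measurable (Function.uncurry f) →
      (∀ᵐ p : EuclideanSpace ℝ (Fin d) × ℝ ∂volume, 0 ≤ p.2 →
        |f p.1 p.2| ≤ ε * min ((1 + ‖p.1‖) ^ (-(d : ℝ) - 2)) ((1 + p.2) ^ (-((d : ℝ) + 2) / 2))) →
      (∫⁻ s in Set.Ioi (0 : ℝ), ∫⁻ y, ENNReal.ofReal |f y s|) ≤ ENNReal.ofReal ε →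
      ∀ t : ℝ, 0 < t → ∀ x : EuclideanSpace ℝ (Fin d),
        |∫ s in Set.Ioc (0 : ℝ) t, ∫ y, K (x - y) (t - s) * f y s| ≤
          C * ε * min ((1 + ‖x‖) ^ (-(d : ℝ))) ((1 + t) ^ (-(d : ℝ) / 2)) := by
  haveI : Nonempty (Fin d) := ⟨⟨0, by omega⟩⟩
  set ω : ℝ := (volume (Metric.ball (0 : EuclideanSpace ℝ (Fin d)) 1)).toReal with hωdef
  have hω0 : 0 ≤ ω := ENNReal.toReal_nonneg
  have hdnn : (0:ℝ) ≤ (d:ℝ) := Nat.cast_nonneg d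
  have hd2 : (2:ℝ) ≤ (d:ℝ) := by exact_mod_cast hd
  have hC₁fin : (∫⁻ y : EuclideanSpace ℝ (Fin d),
      ENNReal.ofReal ((1 + ‖y‖) ^ (-(d:ℝ) - 2))) < ⊤ := by
    have h := finite_integral_one_add_norm (μ := (volume : Measure (EuclideanSpace ℝ (Fin d))))
      (r := (d:ℝ) + 2) (by rw [finrank_euclideanSpace_fin]; linarith)
    have he : -((d:ℝ) + 2) = -(d:ℝ) - 2 := by ring
    rw [he] at h
    exact h
  set C₁ : ℝ := (∫⁻ y : EuclideanSpace ℝ (Fin d),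
      ENNReal.ofReal ((1 + ‖y‖) ^ (-(d:ℝ) - 2))).toReal with hC₁def
  have hC₁0 : 0 ≤ C₁ := ENNReal.toReal_nonneg
  have hC₁eq : (∫⁻ y : EuclideanSpace ℝ (Fin d),
      ENNReal.ofReal ((1 + ‖y‖) ^ (-(d:ℝ) - 2))) = ENNReal.ofReal C₁ :=
    (ENNReal.ofReal_toReal hC₁fin.ne).symm
  set κe : ℝ := ((d:ℝ) + 2)/2 with hκedef
  have h8nn : (0:ℝ) ≤ 8 ^ (d:ℝ) := Real.rpow_nonneg (by norm_num) _
  have h32nn : (0:ℝ) ≤ 32 ^ κe := Real.rpow_nonneg (by norm_num) _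
  have h2nn : (0:ℝ) ≤ 2 ^ (d:ℝ) := Real.rpow_nonneg (by norm_num) _
  have h4nn : (0:ℝ) ≤ 4 ^ (d:ℝ) := Real.rpow_nonneg (by norm_num) _
  set C : ℝ := C₀ * (8 ^ (d:ℝ) + 32 ^ κe * ω * (d:ℝ) / 2 + 2 ^ (d:ℝ) * (C₁ + 2 * (d:ℝ) * ω)) + 1
    with hCdef
  have hCpos : 0 < C := by
    rw [hCdef]
    nlinarith [mul_nonneg h32nn hω0, mul_nonneg (mul_nonneg h32nn hω0) hdnn,
      mul_nonneg h2nn (by nlinarith : (0:ℝ) ≤ C₁ + 2 * (d:ℝ) * ω), hC₀.le]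
  refine ⟨C, hCpos, ?_⟩
  intro ε hε K hKm hK f hfm hf hfL1 t ht x
  -- a.e. rearrangement of the f-bound
  have hPmeas : MeasurableSet {p : EuclideanSpace ℝ (Fin d) × ℝ | 0 ≤ p.2 →
      |f p.1 p.2| ≤ ε * min ((1 + ‖p.1‖) ^ (-(d : ℝ) - 2)) ((1 + p.2) ^ (-((d : ℝ) + 2) / 2))} := by
    have hset : {p : EuclideanSpace ℝ (Fin d) × ℝ | 0 ≤ p.2 →
        |f p.1 p.2| ≤ ε * min ((1 + ‖p.1‖) ^ (-(d : ℝ) - 2)) ((1 + p.2) ^ (-((d : ℝ) + 2) / 2))}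
        = {p : EuclideanSpace ℝ (Fin d) × ℝ | 0 ≤ p.2}ᶜ ∪
          {p : EuclideanSpace ℝ (Fin d) × ℝ |
            |f p.1 p.2| ≤ ε * min ((1 + ‖p.1‖) ^ (-(d : ℝ) - 2))
              ((1 + p.2) ^ (-((d : ℝ) + 2) / 2))} := by
      ext p
      simp [imp_iff_not_or]
    rw [hset]
    refine MeasurableSet.union ?_ ?_
    · exact (measurableSet_le measurable_const measurable_snd).compl
    · exact measurableSet_le (hfm.abs) (by fun_prop)
  have hf2 : ∀ᵐ s : ℝ ∂volume, ∀ᵐ y : EuclideanSpace ℝ (Fin d) ∂volume, 0 ≤ s →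
      |f y s| ≤ ε * min ((1 + ‖y‖) ^ (-(d : ℝ) - 2)) ((1 + s) ^ (-((d : ℝ) + 2) / 2)) := by
    refine stmt4_ae_swap _ _ hPmeas ?_
    rw [← Measure.volume_eq_prod]
    exact hf
  have hxae : ∀ᵐ y : EuclideanSpace ℝ (Fin d) ∂volume, y ≠ x := by
    refine ae_iff.mpr ?_
    have hs1 : {y : EuclideanSpace ℝ (Fin d) | ¬ y ≠ x} = {x} := by ext y; simp [not_not]
    rw [hs1]
    have h1 : ({x} : Set (EuclideanSpace ℝ (Fin d))) ⊆ Metric.closedBall x 0 := by simp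
    refine le_antisymm ((measure_mono h1).trans ?_) (by simp)
    rw [Measure.addHaar_closedBall _ _ le_rfl, finrank_euclideanSpace_fin]
    rw [zero_pow (by omega : d ≠ 0)]
    simp
  have hsae : ∀ᵐ s : ℝ ∂volume, s ≠ t := by
    refine ae_iff.mpr ?_
    have hs1 : {s : ℝ | ¬ s ≠ t} = {t} := by ext s; simp [not_not]
    rw [hs1, Real.volume_singleton]
  set M' : ℝ := ‖x‖ + Real.sqrt t with hM'def
  have hsqt0 : 0 ≤ Real.sqrt t := Real.sqrt_nonneg t
  have hM'0 : 0 ≤ M' := by rw [hM'def]; positivity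
  set M : ℝ := 1 + M' with hMdef
  have hM0 : 0 < M := by rw [hMdef]; linarith
  have hMe_nn : (0:ℝ) ≤ M ^ (-(d:ℝ)) := Real.rpow_nonneg hM0.le _
  have hexpd : -(d:ℝ) ≤ 0 := neg_nonpos.mpr hdnn
  have hMlim : M ^ (-(d:ℝ)) ≤ min ((1 + ‖x‖) ^ (-(d:ℝ))) ((1 + t) ^ (-(d:ℝ)/2)) := by
    refine le_min ?_ ?_
    · refine stmt4_rpow_base_antitone (by positivity) ?_ hexpd
      rw [hMdef, hM'def]; linarith
    · have h2 : M ^ (-(d:ℝ)) ≤ (1 + Real.sqrt t) ^ (-(d:ℝ)) := by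
        refine stmt4_rpow_base_antitone (by linarith) ?_ hexpd
        rw [hMdef, hM'def]; linarith [norm_nonneg x]
      refine h2.trans ?_
      have h3 : 1 + t ≤ (1 + Real.sqrt t)^2 := by
        nlinarith [Real.sq_sqrt ht.le, Real.sqrt_nonneg t]
      have h4 : ((1 + Real.sqrt t)^2) ^ (-(d:ℝ)/2) ≤ (1 + t) ^ (-(d:ℝ)/2) :=
        stmt4_rpow_base_antitone (by linarith) h3 (by linarith)
      refine le_trans (le_of_eq ?_) h4
      rw [← Real.rpow_natCast (1 + Real.sqrt t) 2, ← Real.rpow_mul (by linarith)]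
      congr 1
      push_cast
      ring
  have hFsmeas : Measurable fun s : ℝ => ∫⁻ y, ENNReal.ofReal |f y s| := by
    have hq : Measurable fun q : ℝ × EuclideanSpace ℝ (Fin d) => ENNReal.ofReal |f q.2 q.1| :=
      ((hfm.comp measurable_swap).abs).ennreal_ofReal
    exact hq.lintegral_prod_right'
  have hsIoc : ∀ᵐ s ∂(volume.restrict (Set.Ioc (0:ℝ) t)), s ∈ Set.Ioc (0:ℝ) t :=
    ae_restrict_mem measurableSet_Ioc
  have hsne : ∀ᵐ s ∂(volume.restrict (Set.Ioc (0:ℝ) t)), s ≠ t := ae_restrict_of_ae hsae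
  have hfss : ∀ᵐ s ∂(volume.restrict (Set.Ioc (0:ℝ) t)),
      ∀ᵐ y : EuclideanSpace ℝ (Fin d) ∂volume, 0 ≤ s →
      |f y s| ≤ ε * min ((1 + ‖y‖) ^ (-(d : ℝ) - 2)) ((1 + s) ^ (-((d : ℝ) + 2) / 2)) :=
    ae_restrict_of_ae hf2
  set Lq : ℝ≥0∞ := ∫⁻ s in Set.Ioc (0:ℝ) t, ∫⁻ y, ENNReal.ofReal |K (x - y) (t - s) * f y s|
    with hLqdef
  suffices core2 : Lq ≤ ENNReal.ofReal (C * ε * M ^ (-(d:ℝ))) by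
    have hmin_nn : 0 ≤ min ((1 + ‖x‖) ^ (-(d:ℝ))) ((1 + t) ^ (-(d:ℝ)/2)) :=
      le_min (Real.rpow_nonneg (by positivity) _) (Real.rpow_nonneg (by linarith) _)
    have step1 : |∫ s in Set.Ioc (0:ℝ) t, ∫ y, K (x - y) (t - s) * f y s| ≤
        (∫⁻ s in Set.Ioc (0:ℝ) t, ENNReal.ofReal ‖∫ y, K (x - y) (t - s) * f y s‖).toReal := by
      have h := norm_integral_le_lintegral_norm (μ := volume.restrict (Set.Ioc (0:ℝ) t))
        (fun s => ∫ y, K (x - y) (t - s) * f y s)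
      simpa [Real.norm_eq_abs] using h
    refine step1.trans (ENNReal.toReal_le_of_le_ofReal
      (mul_nonneg (mul_nonneg hCpos.le hε.le) hmin_nn) ?_)
    refine le_trans (le_trans ?_ core2) (ENNReal.ofReal_le_ofReal ?_)
    · refine lintegral_mono fun s => ?_
      calc ENNReal.ofReal ‖∫ y, K (x - y) (t - s) * f y s‖
          ≤ ENNReal.ofReal ((∫⁻ y, ENNReal.ofReal ‖K (x - y) (t - s) * f y s‖).toReal) :=
            ENNReal.ofReal_le_ofReal (norm_integral_le_lintegral_norm _)
        _ ≤ ∫⁻ y, ENNReal.ofReal ‖K (x - y) (t - s) * f y s‖ := ENNReal.ofReal_toReal_le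
        _ = ∫⁻ y, ENNReal.ofReal |K (x - y) (t - s) * f y s| :=
            lintegral_congr fun y => by rw [Real.norm_eq_abs]
    · calc C * ε * M ^ (-(d:ℝ))
          ≤ C * ε * min ((1 + ‖x‖) ^ (-(d:ℝ))) ((1 + t) ^ (-(d:ℝ)/2)) :=
            mul_le_mul_of_nonneg_left hMlim (mul_nonneg hCpos.le hε.le)
        _ = C * ε * min ((1 + ‖x‖) ^ (-(d:ℝ))) ((1 + t) ^ (-(d:ℝ)/2)) := rfl
  by_cases hM'1 : 1 ≤ M'
  · -- Large case: split into far region (use L¹ bound) and near region (pointwise decay)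
    have hM'pos : 0 < M' := by linarith
    set r : ℝ := M'/2 with hrdef
    have hrpos : 0 < r := by rw [hrdef]; linarith
    have hMenn2 : (0:ℝ) ≤ M' ^ (-(d:ℝ)) := Real.rpow_nonneg hM'0 _
    have hMd2nn : (0:ℝ) ≤ M ^ (-(d:ℝ) - 2) := Real.rpow_nonneg hM0.le _
    set cf1 : ℝ := C₀ * (4 ^ (d:ℝ) * M' ^ (-(d:ℝ))) with hcf1
    have hcf1nn : 0 ≤ cf1 := by
      rw [hcf1]; exact mul_nonneg hC₀.le (mul_nonneg h4nn hMenn2)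
    set cf2 : ℝ := C₀ * (ε * (32 ^ κe * M ^ (-(d:ℝ) - 2))) with hcf2
    have hcf2nn : 0 ≤ cf2 := by
      rw [hcf2]
      exact mul_nonneg hC₀.le (mul_nonneg hε.le (mul_nonneg h32nn hMd2nn))
    set c1 : ℝ≥0∞ := ENNReal.ofReal cf1 with hc1
    set c2 : ℝ≥0∞ := ENNReal.ofReal cf2 with hc2
    set indY : EuclideanSpace ℝ (Fin d) → ℝ≥0∞ := fun y =>
      (Metric.ball x r).indicator (fun y => ENNReal.ofReal (‖x - y‖ ^ (-((d:ℝ) - 1)))) y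
      with hindY
    set indS : ℝ → ℝ≥0∞ := fun s =>
      ({s : ℝ | t - s < r^2}).indicator (fun s => ENNReal.ofReal ((t - s) ^ (-(1:ℝ)/2))) s
      with hindS
    have hindSne : ∀ s, indS s ≠ ⊤ := by
      intro s
      rw [hindS]
      simp only [Set.indicator_apply]
      split_ifs <;> simp
    have hindSm : Measurable indS := by
      rw [hindS]
      refine Measurable.indicator (by fun_prop) ?_
      exact measurableSet_lt (by fun_prop) measurable_const
    set IY : ℝ≥0∞ := ∫⁻ y, indY y with hIYdef
    have hIYle : IY ≤ ENNReal.ofReal (ω * ((d:ℝ) * r)) := by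
      rw [hIYdef, hindY, lintegral_indicator measurableSet_ball]
      exact stmt4_ballInt d hd x r hrpos
    have hIYne : IY ≠ ⊤ := ne_top_of_le_ne_top ENNReal.ofReal_ne_top hIYle
    have hISle : ∫⁻ s in Set.Ioc (0:ℝ) t, indS s ≤ ENNReal.ofReal (2 * r) := by
      rw [hindS]
      rw [lintegral_indicator (measurableSet_lt (by fun_prop) measurable_const)]
      rw [Measure.restrict_restrict (measurableSet_lt (by fun_prop) measurable_const)]
      rw [Set.inter_comm]
      exact stmt4_timeInt t r hrpos
    have hae2 : ∀ᵐ s ∂(volume.restrict (Set.Ioc (0:ℝ) t)),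
        (∫⁻ y, ENNReal.ofReal |K (x - y) (t - s) * f y s|) ≤
          c1 * (∫⁻ y, ENNReal.ofReal |f y s|) + (c2 * IY) * indS s := by
      filter_upwards [hsIoc, hsne, hfss] with s hs hsnet hfy
      have hslt : s < t := lt_of_le_of_ne hs.2 hsnet
      have hσ : 0 < t - s := by linarith
      calc ∫⁻ y, ENNReal.ofReal |K (x - y) (t - s) * f y s|
          ≤ ∫⁻ y, (c1 * ENNReal.ofReal |f y s| + (c2 * indS s) * indY y) := by
            refine lintegral_mono_ae ?_
            filter_upwards [hxae, hfy] with y hyx hfb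
            have hxyne : x - y ≠ 0 := sub_ne_zero.mpr (Ne.symm hyx)
            have hzn : 0 < ‖x - y‖ := by rwa [norm_pos_iff]
            have hKb := hK (x - y) hxyne (t - s) hσ
            have hfb' := hfb hs.1.le
            by_cases hcase : r ≤ ‖x - y‖ + Real.sqrt (t - s)
            · have hker : |K (x - y) (t - s)| ≤ cf1 := by
                refine hKb.trans ?_
                rw [hcf1]
                refine mul_le_mul_of_nonneg_left ?_ hC₀.le
                refine (stmt4_kernel_far (d := d) hzn hσ hrpos hcase).trans (le_of_eq ?_)
                rw [hrdef, show M'/2/2 = 4⁻¹ * M' by ring,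
                  Real.mul_rpow (by norm_num) hM'pos.le,
                  Real.inv_rpow (by norm_num : (0:ℝ) ≤ 4),
                  Real.rpow_neg (by norm_num : (0:ℝ) ≤ 4), inv_inv]
              calc ENNReal.ofReal |K (x - y) (t - s) * f y s|
                  = ENNReal.ofReal (|K (x - y) (t - s)| * |f y s|) := by rw [abs_mul]
                _ ≤ ENNReal.ofReal (cf1 * |f y s|) :=
                    ENNReal.ofReal_le_ofReal
                      (mul_le_mul_of_nonneg_right hker (abs_nonneg _))
                _ = c1 * ENNReal.ofReal |f y s| := ENNReal.ofReal_mul hcf1nn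
                _ ≤ _ := self_le_add_right _ _
            · push_neg at hcase
              have hsqσ0 : 0 ≤ Real.sqrt (t - s) := Real.sqrt_nonneg _
              have hyball : y ∈ Metric.ball x r := by
                rw [Metric.mem_ball, dist_eq_norm, norm_sub_rev]
                linarith
              have hstime : t - s < r^2 := by
                have h1 : Real.sqrt (t - s) < r := by linarith
                nlinarith [Real.sq_sqrt hσ.le]
              have htri : M'/2 ≤ ‖y‖ + Real.sqrt s := by
                have h1 : ‖x‖ ≤ ‖x - y‖ + ‖y‖ := by
                  calc ‖x‖ = ‖(x - y) + y‖ := by rw [sub_add_cancel]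
                    _ ≤ ‖x - y‖ + ‖y‖ := norm_add_le _ _
                have h2 : Real.sqrt t ≤ Real.sqrt (t - s) + Real.sqrt s := by
                  have h3 : t ≤ (Real.sqrt (t - s) + Real.sqrt s)^2 := by
                    nlinarith [Real.sq_sqrt hσ.le, Real.sq_sqrt hs.1.le,
                      mul_nonneg hsqσ0 (Real.sqrt_nonneg s)]
                  calc Real.sqrt t ≤ Real.sqrt ((Real.sqrt (t - s) + Real.sqrt s)^2) :=
                        Real.sqrt_le_sqrt h3
                    _ = Real.sqrt (t - s) + Real.sqrt s :=
                        Real.sqrt_sq (by positivity)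
                have h4 : M' = ‖x‖ + Real.sqrt t := hM'def
                have h5 : r = M'/2 := hrdef
                linarith
              have hfar := stmt4_f_far (d := d) (norm_nonneg y) hs.1.le hM'1 htri
              have hker2 : |K (x - y) (t - s)| ≤
                  C₀ * (‖x - y‖ ^ (-((d:ℝ)-1)) * (t - s) ^ (-(1:ℝ)/2)) :=
                hKb.trans (mul_le_mul_of_nonneg_left (stmt4_kernel_interp hd hzn hσ) hC₀.le)
              have hfb2 : |f y s| ≤ ε * (32 ^ κe * M ^ (-(d:ℝ) - 2)) := by
                refine hfb'.trans (mul_le_mul_of_nonneg_left ?_ hε.le)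
                rw [hκedef, hMdef]
                exact hfar
              calc ENNReal.ofReal |K (x - y) (t - s) * f y s|
                  = ENNReal.ofReal (|K (x - y) (t - s)| * |f y s|) := by rw [abs_mul]
                _ ≤ ENNReal.ofReal ((C₀ * (‖x - y‖ ^ (-((d:ℝ)-1)) * (t - s) ^ (-(1:ℝ)/2))) *
                      (ε * (32 ^ κe * M ^ (-(d:ℝ) - 2)))) := by
                    refine ENNReal.ofReal_le_ofReal (mul_le_mul hker2 hfb2 (abs_nonneg _) ?_)
                    exact mul_nonneg hC₀.le (mul_nonneg (Real.rpow_nonneg hzn.le _)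
                      (Real.rpow_nonneg hσ.le _))
                _ = ENNReal.ofReal (cf2 * ((t - s) ^ (-(1:ℝ)/2) * ‖x - y‖ ^ (-((d:ℝ)-1)))) := by
                    rw [hcf2]; congr 1; ring
                _ = (c2 * ENNReal.ofReal ((t - s) ^ (-(1:ℝ)/2))) *
                      ENNReal.ofReal (‖x - y‖ ^ (-((d:ℝ)-1))) := by
                    rw [ENNReal.ofReal_mul hcf2nn,
                      ENNReal.ofReal_mul (Real.rpow_nonneg hσ.le _), mul_assoc]
                _ = (c2 * indS s) * indY y := by
                    rw [hindS, hindY]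
                    simp only []
                    rw [Set.indicator_of_mem (by exact hstime), Set.indicator_of_mem hyball]
                _ ≤ _ := le_add_self
        _ = c1 * (∫⁻ y, ENNReal.ofReal |f y s|) + (c2 * indS s) * IY := by
            rw [lintegral_add_left]
            · rw [lintegral_const_mul' _ _ ENNReal.ofReal_ne_top,
                lintegral_const_mul' _ _
                  (ENNReal.mul_ne_top ENNReal.ofReal_ne_top (hindSne s))]
            · exact measurable_const.mul
                (((hfm.comp (measurable_id.prodMk measurable_const)).abs).ennreal_ofReal)
        _ = c1 * (∫⁻ y, ENNReal.ofReal |f y s|) + (c2 * IY) * indS s := by ring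
    calc Lq ≤ ∫⁻ s in Set.Ioc (0:ℝ) t,
          (c1 * (∫⁻ y, ENNReal.ofReal |f y s|) + (c2 * IY) * indS s) := by
          rw [hLqdef]; exact lintegral_mono_ae hae2
      _ = c1 * (∫⁻ s in Set.Ioc (0:ℝ) t, ∫⁻ y, ENNReal.ofReal |f y s|) +
          (c2 * IY) * (∫⁻ s in Set.Ioc (0:ℝ) t, indS s) := by
          rw [lintegral_add_left (hFsmeas.const_mul _),
            lintegral_const_mul' _ _ ENNReal.ofReal_ne_top,
            lintegral_const_mul' _ _ (ENNReal.mul_ne_top ENNReal.ofReal_ne_top hIYne)]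
      _ ≤ c1 * ENNReal.ofReal ε + (c2 * ENNReal.ofReal (ω * ((d:ℝ) * r))) *
            ENNReal.ofReal (2 * r) := by
          refine add_le_add (mul_le_mul_right ?_ c1)
            (mul_le_mul' (mul_le_mul_right hIYle c2) hISle)
          exact le_trans (lintegral_mono' (Measure.restrict_mono Set.Ioc_subset_Ioi_self
            le_rfl) le_rfl) hfL1
      _ = ENNReal.ofReal (cf1 * ε + cf2 * (ω * ((d:ℝ) * r)) * (2 * r)) := by
          rw [hc1, hc2, ← ENNReal.ofReal_mul hcf1nn, ← ENNReal.ofReal_mul hcf2nn,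
            ← ENNReal.ofReal_mul (mul_nonneg hcf2nn (by positivity)),
            ← ENNReal.ofReal_add (mul_nonneg hcf1nn hε.le)
              (mul_nonneg (mul_nonneg hcf2nn (by positivity)) (by positivity))]
      _ ≤ ENNReal.ofReal (C * ε * M ^ (-(d:ℝ))) := by
          refine ENNReal.ofReal_le_ofReal ?_
          -- real-number endgame
          have hM2M' : M ≤ 2*M' := by rw [hMdef]; linarith
          have hstep : (2*M') ^ (-(d:ℝ)) ≤ M ^ (-(d:ℝ)) :=
            stmt4_rpow_base_antitone hM0 hM2M' hexpd
          have hsplit : (2*M') ^ (-(d:ℝ)) = 2 ^ (-(d:ℝ)) * M' ^ (-(d:ℝ)) :=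
            Real.mul_rpow (by norm_num) hM'0
          have h2cancel : (2:ℝ) ^ (d:ℝ) * 2 ^ (-(d:ℝ)) = 1 := by
            rw [← Real.rpow_add (by norm_num : (0:ℝ) < 2)]; simp
          have f1 : M' ^ (-(d:ℝ)) ≤ 2 ^ (d:ℝ) * M ^ (-(d:ℝ)) := by
            calc M' ^ (-(d:ℝ)) = 2 ^ (d:ℝ) * (2 ^ (-(d:ℝ)) * M' ^ (-(d:ℝ))) := by
                  rw [← mul_assoc, h2cancel, one_mul]
              _ = 2 ^ (d:ℝ) * (2*M') ^ (-(d:ℝ)) := by rw [hsplit]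
              _ ≤ 2 ^ (d:ℝ) * M ^ (-(d:ℝ)) := mul_le_mul_of_nonneg_left hstep h2nn
          have hsplit2 : M ^ (-(d:ℝ)-2) = M ^ (-(d:ℝ)) * M ^ (-(2:ℝ)) := by
            rw [show -(d:ℝ)-2 = (-(d:ℝ)) + (-(2:ℝ)) by ring, Real.rpow_add hM0]
          have hM'M : M' ≤ M := by rw [hMdef]; linarith
          have hsq : M'^2 ≤ M ^ (2:ℝ) := by
            rw [show ((2:ℝ)) = ((2:ℕ):ℝ) by norm_num, Real.rpow_natCast]
            exact pow_le_pow_left₀ hM'0 hM'M 2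
          have hf2' : M ^ (-(2:ℝ)) * M'^2 ≤ 1 := by
            have h1 : M ^ (-(2:ℝ)) * M'^2 ≤ M ^ (-(2:ℝ)) * M ^ (2:ℝ) :=
              mul_le_mul_of_nonneg_left hsq (Real.rpow_nonneg hM0.le _)
            rwa [← Real.rpow_add hM0, show (-(2:ℝ)) + 2 = 0 by ring, Real.rpow_zero] at h1
          have f2 : M ^ (-(d:ℝ)-2) * M'^2 ≤ M ^ (-(d:ℝ)) := by
            calc M ^ (-(d:ℝ)-2) * M'^2 = M ^ (-(d:ℝ)) * (M ^ (-(2:ℝ)) * M'^2) := by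
                  rw [hsplit2]; ring
              _ ≤ M ^ (-(d:ℝ)) * 1 := mul_le_mul_of_nonneg_left hf2' hMe_nn
              _ = M ^ (-(d:ℝ)) := mul_one _
          have h2dd : (2:ℝ) ^ (d:ℝ) * 4 ^ (d:ℝ) = 8 ^ (d:ℝ) := by
            rw [← Real.mul_rpow (by norm_num) (by norm_num)]; norm_num
          have e1 : cf1 * ε ≤ C₀ * 8 ^ (d:ℝ) * (ε * M ^ (-(d:ℝ))) := by
            rw [hcf1]
            calc C₀ * (4 ^ (d:ℝ) * M' ^ (-(d:ℝ))) * ε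
                = (C₀ * 4 ^ (d:ℝ) * ε) * M' ^ (-(d:ℝ)) := by ring
              _ ≤ (C₀ * 4 ^ (d:ℝ) * ε) * (2 ^ (d:ℝ) * M ^ (-(d:ℝ))) :=
                  mul_le_mul_of_nonneg_left f1
                    (mul_nonneg (mul_nonneg hC₀.le h4nn) hε.le)
              _ = (2 ^ (d:ℝ) * 4 ^ (d:ℝ)) * (C₀ * ε * M ^ (-(d:ℝ))) := by ring
              _ = C₀ * 8 ^ (d:ℝ) * (ε * M ^ (-(d:ℝ))) := by rw [h2dd]; ring
          have e2 : cf2 * (ω * ((d:ℝ) * r)) * (2 * r) ≤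
              C₀ * (32 ^ κe * ω * (d:ℝ) / 2) * (ε * M ^ (-(d:ℝ))) := by
            rw [hcf2, hrdef]
            calc C₀ * (ε * (32 ^ κe * M ^ (-(d:ℝ)-2))) * (ω * ((d:ℝ) * (M'/2))) * (2 * (M'/2))
                = (C₀ * ε * 32 ^ κe * ω * (d:ℝ) / 2) * (M ^ (-(d:ℝ)-2) * M'^2) := by ring
              _ ≤ (C₀ * ε * 32 ^ κe * ω * (d:ℝ) / 2) * M ^ (-(d:ℝ)) := by
                  refine mul_le_mul_of_nonneg_left f2 ?_
                  have := mul_nonneg (mul_nonneg (mul_nonneg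
                    (mul_nonneg hC₀.le hε.le) h32nn) hω0) hdnn
                  linarith
              _ = C₀ * (32 ^ κe * ω * (d:ℝ) / 2) * (ε * M ^ (-(d:ℝ))) := by ring
          have hCge : C₀ * 8 ^ (d:ℝ) + C₀ * (32 ^ κe * ω * (d:ℝ) / 2) ≤ C := by
            rw [hCdef]
            nlinarith [mul_nonneg (mul_nonneg hC₀.le h2nn)
              (by nlinarith : (0:ℝ) ≤ C₁ + 2 * (d:ℝ) * ω)]
          calc cf1 * ε + cf2 * (ω * ((d:ℝ) * r)) * (2 * r)
              ≤ C₀ * 8 ^ (d:ℝ) * (ε * M ^ (-(d:ℝ))) +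
                C₀ * (32 ^ κe * ω * (d:ℝ) / 2) * (ε * M ^ (-(d:ℝ))) := add_le_add e1 e2
            _ = (C₀ * 8 ^ (d:ℝ) + C₀ * (32 ^ κe * ω * (d:ℝ) / 2)) * (ε * M ^ (-(d:ℝ))) := by
                ring
            _ ≤ C * (ε * M ^ (-(d:ℝ))) :=
                mul_le_mul_of_nonneg_right hCge (mul_nonneg hε.le hMe_nn)
            _ = C * ε * M ^ (-(d:ℝ)) := by ring
  · -- Small case : ‖x‖ + √t < 1
    push_neg at hM'1
    have hsqtlt : Real.sqrt t < 1 := by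
      have h2 := hM'def
      linarith [norm_nonneg x]
    have ht1 : t < 1 := by nlinarith [Real.sq_sqrt ht.le, Real.sqrt_nonneg t]
    set ca : ℝ := C₀ * ε with hcadef
    have hcann : 0 ≤ ca := mul_nonneg hC₀.le hε.le
    set indY1 : EuclideanSpace ℝ (Fin d) → ℝ≥0∞ := fun y =>
      (Metric.ball x 1).indicator (fun y => ENNReal.ofReal (‖x - y‖ ^ (-((d:ℝ) - 1)))) y
      with hindY1
    set IY1 : ℝ≥0∞ := ∫⁻ y, indY1 y with hIY1def
    have hIY1le : IY1 ≤ ENNReal.ofReal (ω * ((d:ℝ) * 1)) := by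
      rw [hIY1def, hindY1, lintegral_indicator measurableSet_ball]
      exact stmt4_ballInt d hd x 1 one_pos
    have hIY1ne : IY1 ≠ ⊤ := ne_top_of_le_ne_top ENNReal.ofReal_ne_top hIY1le
    have hQle : ∫⁻ s in Set.Ioc (0:ℝ) t, ENNReal.ofReal ((t - s) ^ (-(1:ℝ)/2)) ≤
        ENNReal.ofReal (2 * 1) := by
      have hsub : Set.Ioc (0:ℝ) t ⊆ {s : ℝ | t - s < (1:ℝ)^2} := by
        intro s hs
        simp only [Set.mem_setOf_eq]
        nlinarith [hs.1]
      have h := stmt4_timeInt t 1 one_pos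
      rwa [Set.inter_eq_left.mpr hsub] at h
    have hae1 : ∀ᵐ s ∂(volume.restrict (Set.Ioc (0:ℝ) t)),
        (∫⁻ y, ENNReal.ofReal |K (x - y) (t - s) * f y s|) ≤
          ENNReal.ofReal ca * ENNReal.ofReal C₁ +
            (ENNReal.ofReal ca * IY1) * ENNReal.ofReal ((t - s) ^ (-(1:ℝ)/2)) := by
      filter_upwards [hsIoc, hsne, hfss] with s hs hsnet hfy
      have hslt : s < t := lt_of_le_of_ne hs.2 hsnet
      have hσ : 0 < t - s := by linarith
      have hmly : Measurable fun y : EuclideanSpace ℝ (Fin d) =>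
          ENNReal.ofReal ca * ENNReal.ofReal ((1 + ‖y‖) ^ (-(d:ℝ) - 2)) :=
        Measurable.const_mul (by fun_prop) _
      calc ∫⁻ y, ENNReal.ofReal |K (x - y) (t - s) * f y s|
          ≤ ∫⁻ y, (ENNReal.ofReal ca * ENNReal.ofReal ((1 + ‖y‖) ^ (-(d:ℝ) - 2)) +
              (ENNReal.ofReal ca * ENNReal.ofReal ((t - s) ^ (-(1:ℝ)/2))) * indY1 y) := by
            refine lintegral_mono_ae ?_
            filter_upwards [hxae, hfy] with y hyx hfb
            have hxyne : x - y ≠ 0 := sub_ne_zero.mpr (Ne.symm hyx)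
            have hzn : 0 < ‖x - y‖ := by rwa [norm_pos_iff]
            have hKb := hK (x - y) hxyne (t - s) hσ
            have hfb' := hfb hs.1.le
            by_cases hcase : 1 ≤ ‖x - y‖
            · have hker : |K (x - y) (t - s)| ≤ C₀ := by
                refine hKb.trans ?_
                have h1 : min (‖x - y‖ ^ (-(d:ℝ))) ((t - s) ^ (-(d:ℝ)/2)) ≤
                    ‖x - y‖ ^ (-(d:ℝ)) := min_le_left _ _
                have h2 : ‖x - y‖ ^ (-(d:ℝ)) ≤ 1 :=
                  Real.rpow_le_one_of_one_le_of_nonpos hcase hexpd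
                calc C₀ * min (‖x - y‖ ^ (-(d:ℝ))) ((t - s) ^ (-(d:ℝ)/2))
                    ≤ C₀ * 1 := mul_le_mul_of_nonneg_left (h1.trans h2) hC₀.le
                  _ = C₀ := mul_one _
              have hfb2 : |f y s| ≤ ε * (1 + ‖y‖) ^ (-(d:ℝ) - 2) :=
                hfb'.trans (mul_le_mul_of_nonneg_left (min_le_left _ _) hε.le)
              calc ENNReal.ofReal |K (x - y) (t - s) * f y s|
                  = ENNReal.ofReal (|K (x - y) (t - s)| * |f y s|) := by rw [abs_mul]
                _ ≤ ENNReal.ofReal (C₀ * (ε * (1 + ‖y‖) ^ (-(d:ℝ) - 2))) :=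
                    ENNReal.ofReal_le_ofReal
                      (mul_le_mul hker hfb2 (abs_nonneg _) hC₀.le)
                _ = ENNReal.ofReal ca * ENNReal.ofReal ((1 + ‖y‖) ^ (-(d:ℝ) - 2)) := by
                    rw [show C₀ * (ε * (1 + ‖y‖) ^ (-(d:ℝ) - 2)) =
                      ca * ((1 + ‖y‖) ^ (-(d:ℝ) - 2)) by rw [hcadef]; ring,
                      ENNReal.ofReal_mul hcann]
                _ ≤ _ := self_le_add_right _ _
            · push_neg at hcase
              have hyball : y ∈ Metric.ball x 1 := by
                rw [Metric.mem_ball, dist_eq_norm, norm_sub_rev]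
                exact hcase
              have hker2 : |K (x - y) (t - s)| ≤
                  C₀ * (‖x - y‖ ^ (-((d:ℝ)-1)) * (t - s) ^ (-(1:ℝ)/2)) :=
                hKb.trans (mul_le_mul_of_nonneg_left (stmt4_kernel_interp hd hzn hσ) hC₀.le)
              have hfb2 : |f y s| ≤ ε := by
                refine hfb'.trans ?_
                have h1 : min ((1 + ‖y‖) ^ (-(d:ℝ) - 2)) ((1 + s) ^ (-((d:ℝ)+2)/2)) ≤
                    (1 + ‖y‖) ^ (-(d:ℝ) - 2) := min_le_left _ _
                have h2 : (1 + ‖y‖) ^ (-(d:ℝ) - 2) ≤ 1 :=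
                  Real.rpow_le_one_of_one_le_of_nonpos
                    (by linarith [norm_nonneg y]) (by linarith)
                calc ε * min ((1 + ‖y‖) ^ (-(d:ℝ) - 2)) ((1 + s) ^ (-((d:ℝ)+2)/2))
                    ≤ ε * 1 := mul_le_mul_of_nonneg_left (h1.trans h2) hε.le
                  _ = ε := mul_one _
              calc ENNReal.ofReal |K (x - y) (t - s) * f y s|
                  = ENNReal.ofReal (|K (x - y) (t - s)| * |f y s|) := by rw [abs_mul]
                _ ≤ ENNReal.ofReal ((C₀ * (‖x - y‖ ^ (-((d:ℝ)-1)) * (t - s) ^ (-(1:ℝ)/2))) * ε) := by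
                    refine ENNReal.ofReal_le_ofReal (mul_le_mul hker2 hfb2 (abs_nonneg _) ?_)
                    exact mul_nonneg hC₀.le (mul_nonneg (Real.rpow_nonneg hzn.le _)
                      (Real.rpow_nonneg hσ.le _))
                _ = ENNReal.ofReal (ca * ((t - s) ^ (-(1:ℝ)/2) * ‖x - y‖ ^ (-((d:ℝ)-1)))) := by
                    rw [show (C₀ * (‖x - y‖ ^ (-((d:ℝ)-1)) * (t - s) ^ (-(1:ℝ)/2))) * ε =
                      ca * ((t - s) ^ (-(1:ℝ)/2) * ‖x - y‖ ^ (-((d:ℝ)-1))) by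
                        rw [hcadef]; ring]
                _ = (ENNReal.ofReal ca * ENNReal.ofReal ((t - s) ^ (-(1:ℝ)/2))) *
                      ENNReal.ofReal (‖x - y‖ ^ (-((d:ℝ)-1))) := by
                    rw [ENNReal.ofReal_mul hcann,
                      ENNReal.ofReal_mul (Real.rpow_nonneg hσ.le _), mul_assoc]
                _ = (ENNReal.ofReal ca * ENNReal.ofReal ((t - s) ^ (-(1:ℝ)/2))) * indY1 y := by
                    rw [hindY1]
                    simp only []
                    rw [Set.indicator_of_mem hyball]
                _ ≤ _ := le_add_self
        _ = ENNReal.ofReal ca * (∫⁻ y, ENNReal.ofReal ((1 + ‖y‖) ^ (-(d:ℝ) - 2))) +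
            (ENNReal.ofReal ca * ENNReal.ofReal ((t - s) ^ (-(1:ℝ)/2))) * IY1 := by
            rw [lintegral_add_left hmly,
              lintegral_const_mul' _ _ ENNReal.ofReal_ne_top,
              lintegral_const_mul' _ _
                (ENNReal.mul_ne_top ENNReal.ofReal_ne_top ENNReal.ofReal_ne_top)]
        _ = ENNReal.ofReal ca * ENNReal.ofReal C₁ +
            (ENNReal.ofReal ca * IY1) * ENNReal.ofReal ((t - s) ^ (-(1:ℝ)/2)) := by
            rw [hC₁eq]; ring
    calc Lq ≤ ∫⁻ s in Set.Ioc (0:ℝ) t, (ENNReal.ofReal ca * ENNReal.ofReal C₁ +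
          (ENNReal.ofReal ca * IY1) * ENNReal.ofReal ((t - s) ^ (-(1:ℝ)/2))) := by
          rw [hLqdef]; exact lintegral_mono_ae hae1
      _ = (ENNReal.ofReal ca * ENNReal.ofReal C₁) * volume (Set.Ioc (0:ℝ) t) +
          (ENNReal.ofReal ca * IY1) *
            (∫⁻ s in Set.Ioc (0:ℝ) t, ENNReal.ofReal ((t - s) ^ (-(1:ℝ)/2))) := by
          rw [lintegral_add_left measurable_const, setLIntegral_const,
            lintegral_const_mul' _ _ (ENNReal.mul_ne_top ENNReal.ofReal_ne_top hIY1ne)]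
      _ ≤ (ENNReal.ofReal ca * ENNReal.ofReal C₁) * ENNReal.ofReal 1 +
          (ENNReal.ofReal ca * ENNReal.ofReal (ω * ((d:ℝ)*1))) * ENNReal.ofReal (2*1) := by
          refine add_le_add (mul_le_mul_right ?_ _)
            (mul_le_mul' (mul_le_mul_right hIY1le _) hQle)
          rw [Real.volume_Ioc]
          exact ENNReal.ofReal_le_ofReal (by linarith)
      _ = ENNReal.ofReal (ca * C₁ * 1 + ca * (ω * ((d:ℝ)*1)) * (2*1)) := by
          rw [← ENNReal.ofReal_mul hcann, ← ENNReal.ofReal_mul (mul_nonneg hcann hC₁0),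
            ← ENNReal.ofReal_mul hcann,
            ← ENNReal.ofReal_mul (mul_nonneg hcann (mul_nonneg hω0 (by positivity))),
            ← ENNReal.ofReal_add (mul_nonneg (mul_nonneg hcann hC₁0) (by norm_num))
              (mul_nonneg (mul_nonneg hcann (mul_nonneg hω0 (by positivity))) (by norm_num))]
      _ ≤ ENNReal.ofReal (C * ε * M ^ (-(d:ℝ))) := by
          refine ENNReal.ofReal_le_ofReal ?_
          have hM2 : M ≤ 2 := by rw [hMdef]; linarith
          have hMd2 : (2:ℝ) ^ (-(d:ℝ)) ≤ M ^ (-(d:ℝ)) :=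
            stmt4_rpow_base_antitone hM0 hM2 hexpd
          have h2cancel : (2:ℝ) ^ (d:ℝ) * 2 ^ (-(d:ℝ)) = 1 := by
            rw [← Real.rpow_add (by norm_num : (0:ℝ) < 2)]; simp
          have e0 : ca * C₁ * 1 + ca * (ω * ((d:ℝ)*1)) * (2*1) =
              (C₀ * (2 ^ (d:ℝ) * (C₁ + 2 * (d:ℝ) * ω))) * (ε * 2 ^ (-(d:ℝ))) := by
            rw [hcadef]
            linear_combination (-(C₀ * (C₁ + 2 * (d:ℝ) * ω) * ε)) * h2cancel
          rw [e0]
          have hc2nn : (0:ℝ) ≤ C₀ * (2 ^ (d:ℝ) * (C₁ + 2 * (d:ℝ) * ω)) :=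
            mul_nonneg hC₀.le (mul_nonneg h2nn (by nlinarith))
          have step1' : (C₀ * (2 ^ (d:ℝ) * (C₁ + 2 * (d:ℝ) * ω))) * (ε * 2 ^ (-(d:ℝ))) ≤
              (C₀ * (2 ^ (d:ℝ) * (C₁ + 2 * (d:ℝ) * ω))) * (ε * M ^ (-(d:ℝ))) :=
            mul_le_mul_of_nonneg_left (mul_le_mul_of_nonneg_left hMd2 hε.le) hc2nn
          refine step1'.trans ?_
          have hCge1 : C₀ * (2 ^ (d:ℝ) * (C₁ + 2 * (d:ℝ) * ω)) ≤ C := by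
            rw [hCdef]
            nlinarith [mul_nonneg hC₀.le h8nn,
              mul_nonneg (mul_nonneg (mul_nonneg hC₀.le h32nn) hω0) hdnn]
          calc (C₀ * (2 ^ (d:ℝ) * (C₁ + 2 * (d:ℝ) * ω))) * (ε * M ^ (-(d:ℝ)))
              ≤ C * (ε * M ^ (-(d:ℝ))) :=
                mul_le_mul_of_nonneg_right hCge1 (mul_nonneg hε.le hMe_nn)
            _ = C * ε * M ^ (-(d:ℝ)) := by ring
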